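/- The total order on Φ_n^+ induced by a reduced expression of w_0 is convex: if α, β, α+β are all positive roots and α < β in this order, then α < α+β < β. -/

import Mathlib

/-- The set of positive roots of type `A_n`, realized as vectors `e_i - e_j`
(`i < j`) in `ℤ^{n+1}`. -/
def PosRootA (n : ℕ) : Set (Fin (n + 1) → ℤ) :=
  {v | ∃ i j : Fin (n + 1), i < j ∧ v = Pi.single i 1 - Pi.single j 1}

/-- The `k`-th simple root `α_k = e_k - e_{k+1}` of type `A_n`. -/
def simpleA (n : ℕ) (k : Fin n) : Fin (n + 1) → ℤ :=
  Pi.single k.castSucc 1 - Pi.single k.succ 1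

/-- The `k`-th simple reflection of the Weyl group `S_{n+1}` of type `A_n`. -/
def sA (n : ℕ) (k : Fin n) : Equiv.Perm (Fin (n + 1)) := Equiv.swap k.castSucc k.succ

/-- The natural action of the Weyl group `S_{n+1}` on root vectors. -/
def permAct (n : ℕ) (w : Equiv.Perm (Fin (n + 1))) (v : Fin (n + 1) → ℤ) :
    Fin (n + 1) → ℤ :=
  v ∘ w.symm

/-! ### Auxiliary machinery: inversion sets of permutations -/

/-- The inversion set of a permutation: ordered pairs `(p,q)` with `p < q` whose
preimages are out of order. -/
def invF {m : ℕ} (σ : Equiv.Perm (Fin m)) : Finset (Fin m × Fin m) :=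
  Finset.univ.filter (fun pq => pq.1 < pq.2 ∧ σ⁻¹ pq.2 < σ⁻¹ pq.1)

lemma mem_invF {m : ℕ} (σ : Equiv.Perm (Fin m)) (pq : Fin m × Fin m) :
    pq ∈ invF σ ↔ pq.1 < pq.2 ∧ σ⁻¹ pq.2 < σ⁻¹ pq.1 := by
  simp [invF]

lemma swap_lt_swap_iff {m : ℕ} {u v : Fin m} (huv : u.val + 1 = v.val) (x y : Fin m) :
    Equiv.swap u v x < Equiv.swap u v y ↔
      ((x < y ∧ ¬(x = u ∧ y = v)) ∨ (x = v ∧ y = u)) := by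
  simp only [Equiv.swap_apply_def, Fin.lt_def, Fin.ext_iff]
  split_ifs <;> simp_all [Fin.ext_iff] <;> omega

lemma key_iff {m : ℕ} (σ : Equiv.Perm (Fin m)) {u v : Fin m}
    (huv : u.val + 1 = v.val) (pq : Fin m × Fin m) :
    (σ * Equiv.swap u v)⁻¹ pq.2 < (σ * Equiv.swap u v)⁻¹ pq.1 ↔
      ((σ⁻¹ pq.2 < σ⁻¹ pq.1 ∧ ¬(pq.2 = σ u ∧ pq.1 = σ v)) ∨
        (pq.2 = σ v ∧ pq.1 = σ u)) := by
  rw [mul_inv_rev, Equiv.Perm.mul_apply, Equiv.Perm.mul_apply]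
  rw [show (Equiv.swap u v)⁻¹ = Equiv.swap u v from Equiv.swap_inv u v]
  rw [swap_lt_swap_iff huv]
  constructor
  · rintro (⟨h1, h2⟩ | ⟨h1, h2⟩)
    · refine Or.inl ⟨h1, ?_⟩
      rintro ⟨e1, e2⟩
      exact h2 ⟨by simp [e1], by simp [e2]⟩
    · exact Or.inr ⟨by rw [← h1]; exact (σ.apply_symm_apply _).symm,
        by rw [← h2]; exact (σ.apply_symm_apply _).symm⟩
  · rintro (⟨h1, h2⟩ | ⟨h1, h2⟩)
    · refine Or.inl ⟨h1, ?_⟩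
      rintro ⟨e1, e2⟩
      exact h2 ⟨by rw [← e1]; exact (σ.apply_symm_apply _).symm,
        by rw [← e2]; exact (σ.apply_symm_apply _).symm⟩
    · exact Or.inr ⟨by simp [h1], by simp [h2]⟩

lemma invF_mul_swap_neg {m : ℕ} (σ : Equiv.Perm (Fin m)) {u v : Fin m}
    (huv : u.val + 1 = v.val) (hlt : σ v < σ u) :
    invF (σ * Equiv.swap u v) = (invF σ).erase (σ v, σ u) ∧ (σ v, σ u) ∈ invF σ := by
  constructor
  · ext pq
    rw [Finset.mem_erase, mem_invF, mem_invF, key_iff σ huv]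
    constructor
    · rintro ⟨h1, (⟨h2, h3⟩ | ⟨h2, h3⟩)⟩
      · refine ⟨?_, h1, h2⟩
        intro e
        exact h3 ⟨by rw [e], by rw [e]⟩
      · exfalso
        rw [h2, h3] at h1
        exact absurd h1 (by omega)
    · rintro ⟨hne, h1, h2⟩
      refine ⟨h1, Or.inl ⟨h2, ?_⟩⟩
      rintro ⟨e1, e2⟩
      exact hne (Prod.ext e2 e1)
  · rw [mem_invF]
    exact ⟨hlt, by simp; omega⟩

lemma invF_mul_swap_pos {m : ℕ} (σ : Equiv.Perm (Fin m)) {u v : Fin m}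
    (huv : u.val + 1 = v.val) (hlt : σ u < σ v) :
    invF (σ * Equiv.swap u v) = insert (σ u, σ v) (invF σ) ∧ (σ u, σ v) ∉ invF σ := by
  constructor
  · ext pq
    rw [Finset.mem_insert, mem_invF, mem_invF, key_iff σ huv]
    constructor
    · rintro ⟨h1, (⟨h2, h3⟩ | ⟨h2, h3⟩)⟩
      · exact Or.inr ⟨h1, h2⟩
      · exact Or.inl (Prod.ext h3 h2)
    · rintro (h | ⟨h1, h2⟩)
      · subst h
        exact ⟨hlt, Or.inr ⟨rfl, rfl⟩⟩
      · refine ⟨h1, Or.inl ⟨h2, ?_⟩⟩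
        rintro ⟨e2, e1⟩
        rw [e1, e2] at h1
        exact absurd h1 (by omega)
  · rw [mem_invF]
    rintro ⟨-, h2⟩
    simp only [Equiv.Perm.inv_def, Equiv.symm_apply_apply] at h2
    exact absurd h2 (by omega)

/-- All strictly increasing pairs. -/
def allPairs (m : ℕ) : Finset (Fin m × Fin m) :=
  Finset.univ.filter (fun pq => pq.1 < pq.2)

lemma card_allPairs (m : ℕ) : 2 * (allPairs m).card = m * m - m := by
  classical
  have hbij : (Finset.univ.filter (fun pq : Fin m × Fin m => pq.2 < pq.1)).card
      = (allPairs m).card := by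
    apply Finset.card_bij (fun pq _ => Prod.swap pq)
    · intro a ha; simp_all [allPairs]
    · intro a ha b hb hab
      exact Prod.swap_injective hab
    · intro b hb
      exact ⟨Prod.swap b, by simp_all [allPairs], by simp⟩
  have hdisj : (Finset.univ : Finset (Fin m)).offDiag
      = allPairs m ∪ Finset.univ.filter (fun pq => pq.2 < pq.1) := by
    ext pq
    simp only [Finset.mem_offDiag, Finset.mem_union, allPairs, Finset.mem_filter,
      Finset.mem_univ, true_and]
    constructor
    · intro h; exact lt_or_gt_of_ne h
    · rintro (h | h)
      exacts [ne_of_lt h, ne_of_gt h]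
  have hd : Disjoint (allPairs m) (Finset.univ.filter (fun pq : Fin m × Fin m => pq.2 < pq.1)) := by
    rw [Finset.disjoint_left]
    intro pq h1 h2
    simp [allPairs] at h1 h2
    omega
  have := Finset.card_union_of_disjoint hd
  rw [← hdisj] at this
  rw [Finset.offDiag_card] at this
  simp at this
  omega

lemma invF_one (m : ℕ) : invF (1 : Equiv.Perm (Fin m)) = ∅ := by
  ext pq
  simp only [mem_invF, Finset.notMem_empty, iff_false]
  rintro ⟨h1, h2⟩
  simp at h2
  omega

lemma invF_rev (m : ℕ) : invF (Fin.revPerm : Equiv.Perm (Fin (m + 1))) = allPairs (m + 1) := by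
  ext pq
  simp only [mem_invF, allPairs, Finset.mem_filter, Finset.mem_univ, true_and]
  constructor
  · rintro ⟨h, -⟩; exact h
  · intro h
    refine ⟨h, ?_⟩
    simp only [Fin.revPerm_symm, Equiv.Perm.inv_def, Fin.revPerm_apply]
    exact Fin.rev_lt_rev.mpr h

lemma single_classify {m : ℕ} (a b c d p q : Fin m)
    (hab : a ≠ b) (hcd : c ≠ d) (hpq : p ≠ q)
    (h : ((Pi.single a 1 : Fin m → ℤ) - Pi.single b 1) + (Pi.single c 1 - Pi.single d 1)
        = (Pi.single p (1:ℤ) - Pi.single q 1)) :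
    (p = a ∧ b = c ∧ q = d) ∨ (a = d ∧ p = c ∧ q = b) := by
  have H : ∀ j : Fin m, (if j = a then (1:ℤ) else 0) - (if j = b then 1 else 0)
      + ((if j = c then 1 else 0) - (if j = d then 1 else 0))
      = (if j = p then 1 else 0) - (if j = q then 1 else 0) := by
    intro j
    have := congrFun h j
    simpa [Pi.single_apply] using this
  by_cases hpa : p = a
  · left
    refine ⟨hpa, ?_, ?_⟩
    · have Hc := H c
      subst hpa
      split_ifs at Hc <;> first | tauto | omega
    · have Hq := H q
      subst hpa
      have hbc : b = c := by
        have Hc := H c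
        split_ifs at Hc <;> first | tauto | omega
      subst hbc
      split_ifs at Hq <;> first | tauto | omega
  · right
    have had : a = d := by
      have Ha := H a
      split_ifs at Ha <;> first | tauto | omega
    have hpc : p = c := by
      have Hp := H p
      subst had
      split_ifs at Hp <;> first | tauto | omega
    have hqb : q = b := by
      have Hq := H q
      subst had hpc
      split_ifs at Hq <;> first | tauto | omega
    exact ⟨had, hpc, hqb⟩

lemma permAct_single (n : ℕ) (σ : Equiv.Perm (Fin (n + 1))) (u v : Fin (n + 1)) :
    permAct n σ ((Pi.single u 1 : Fin (n + 1) → ℤ) - Pi.single v 1)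
      = (Pi.single (σ u) 1 : Fin (n + 1) → ℤ) - Pi.single (σ v) 1 := by
  funext j
  simp only [permAct, Function.comp_apply, Pi.sub_apply, Pi.single_apply]
  simp only [Equiv.symm_apply_eq]

/-- The total order on positive roots induced by a reduced expression of the
longest element (via `β_z := s_{i_1} ⋯ s_{i_{z-1}}(α_{i_z})`) is convex: if
`β_x + β_y = β_z` and `x < y`, then `x < z < y`. -/
theorem reduced_word_order_is_convex (n N : ℕ) (hN : N = n * (n + 1) / 2)
    (i : Fin N → Fin n)
    (hred : (List.ofFn fun t => sA n (i t)).prod =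
      (Fin.revPerm : Equiv.Perm (Fin (n + 1)))) :
    let f : Fin N → (Fin (n + 1) → ℤ) := fun z =>
      permAct n (((List.ofFn fun t => sA n (i t)).take z.val).prod) (simpleA n (i z))
    ∀ x y z : Fin N, f x + f y = f z → x < y → x < z ∧ z < y := by
  intro f x y z hsum hxy
  classical
  set L : List (Equiv.Perm (Fin (n + 1))) := List.ofFn fun t => sA n (i t) with hLdef
  have hL : L.length = N := by simp [hLdef]
  set σ : ℕ → Equiv.Perm (Fin (n + 1)) := fun t => (L.take t).prod with hσdef
  -- the step relation
  have hstep0 : ∀ t : Fin N, σ (t.val + 1) = σ t.val * sA n (i t) := by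
    intro t
    have hlt : t.val < L.length := by rw [hL]; exact t.isLt
    have := List.prod_take_succ L t.val hlt
    rw [hσdef]
    simp only
    rw [this]
    congr 1
    simp [hLdef]
  have huv : ∀ c : Fin n, ((c.castSucc : Fin (n + 1)) : ℕ) + 1 = ((c.succ : Fin (n + 1)) : ℕ) := by
    intro c; simp
  -- σ N = revPerm
  have hσN : σ N = Fin.revPerm := by
    rw [hσdef]
    simp only
    rw [List.take_of_length_le (le_of_eq hL), hred]
  -- cardinality bounds
  have hub : ∀ t, t ≤ N → (invF (σ t)).card ≤ t := by
    intro t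
    induction t with
    | zero =>
      intro _
      have : σ 0 = 1 := by simp [hσdef]
      rw [this, invF_one]
      simp
    | succ t ih =>
      intro ht
      have htN : t < N := ht
      have ih' := ih (le_of_lt htN)
      rw [hstep0 ⟨t, htN⟩]
      set c := i ⟨t, htN⟩
      rcases lt_trichotomy (σ t c.castSucc) (σ t c.succ) with h | h | h
      · have := (invF_mul_swap_pos (σ t) (huv c) h).1
        rw [sA, this]
        calc (insert _ (invF (σ t))).card ≤ (invF (σ t)).card + 1 := Finset.card_insert_le _ _
          _ ≤ t + 1 := by omega
      · exfalso
        have hceq : c.castSucc = c.succ := (Equiv.injective _) h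
        have h2 := huv c
        rw [hceq] at h2
        omega
      · have := (invF_mul_swap_neg (σ t) (huv c) h).1
        rw [sA, this]
        have := Finset.card_erase_le (a := (σ t c.succ, σ t c.castSucc)) (s := invF (σ t))
        omega
  have hlb : ∀ s t, t + s ≤ N → (invF (σ (t + s))).card ≤ (invF (σ t)).card + s := by
    intro s
    induction s with
    | zero => intro t _; simp
    | succ s ih =>
      intro t ht
      have htN : t + s < N := by omega
      have ih' := ih t (by omega)
      have : t + (s + 1) = (t + s) + 1 := by omega
      rw [this, hstep0 ⟨t + s, htN⟩]
      set c := i ⟨t + s, htN⟩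
      rcases lt_trichotomy (σ (t + s) c.castSucc) (σ (t + s) c.succ) with h | h | h
      · have := (invF_mul_swap_pos (σ (t + s)) (huv c) h).1
        rw [sA, this]
        have := Finset.card_insert_le (σ (t + s) c.castSucc, σ (t + s) c.succ) (invF (σ (t + s)))
        omega
      · exfalso
        have hceq : c.castSucc = c.succ := (Equiv.injective _) h
        have h2 := huv c
        rw [hceq] at h2
        omega
      · have := (invF_mul_swap_neg (σ (t + s)) (huv c) h).1
        rw [sA, this]
        have := Finset.card_erase_le (a := (σ (t + s) c.succ, σ (t + s) c.castSucc))
          (s := invF (σ (t + s)))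
        omega
  have hcardN : (invF (σ N)).card = N := by
    rw [hσN, invF_rev]
    have h2 := card_allPairs (n + 1)
    have hmul : (n + 1) * (n + 1) - (n + 1) = n * (n + 1) := by
      have : (n + 1) * (n + 1) = n * (n + 1) + (n + 1) := by ring
      omega
    rw [hmul] at h2
    have hev : n * (n + 1) % 2 = 0 := Nat.even_iff.mp (Nat.even_mul_succ_self n)
    omega
  have hcard : ∀ t, t ≤ N → (invF (σ t)).card = t := by
    intro t ht
    have h1 := hub t ht
    have h2 := hlb (N - t) t (by omega)
    rw [show t + (N - t) = N by omega, hcardN] at h2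
    omega
  -- the step is always an insertion
  set P : Fin N → Fin (n + 1) × Fin (n + 1) :=
    fun t => (σ t.val ((i t).castSucc), σ t.val ((i t).succ)) with hPdef
  have hstep : ∀ t : Fin N,
      invF (σ (t.val + 1)) = insert (P t) (invF (σ t.val)) ∧ P t ∉ invF (σ t.val) := by
    intro t
    set c := i t
    rcases lt_trichotomy (σ t.val c.castSucc) (σ t.val c.succ) with h | h | h
    · have hp := invF_mul_swap_pos (σ t.val) (huv c) h
      rw [hstep0 t, sA]
      exact hp
    · exfalso
      have hceq : c.castSucc = c.succ := (Equiv.injective _) h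
      have h2 := huv c
      rw [hceq] at h2
      omega
    · exfalso
      have hp := invF_mul_swap_neg (σ t.val) (huv c) h
      have hc1 : (invF (σ (t.val + 1))).card = t.val + 1 := hcard _ (by omega)
      have hc2 : (invF (σ t.val)).card = t.val := hcard _ (by omega)
      rw [hstep0 t, sA] at hc1
      rw [hp.1] at hc1
      have := Finset.card_erase_of_mem hp.2
      omega
  have hPlt : ∀ t : Fin N, (P t).1 < (P t).2 := by
    intro t
    have h1 := (hstep t).1
    have h2 := (hstep t).2
    have : P t ∈ invF (σ (t.val + 1)) := by rw [h1]; exact Finset.mem_insert_self _ _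
    exact ((mem_invF _ _).mp this).1
  -- monotonicity of the chain
  have hmono : ∀ a b : ℕ, a ≤ b → b ≤ N → invF (σ a) ⊆ invF (σ b) := by
    intro a b hab hbN
    induction b with
    | zero => simp_all
    | succ b ih =>
      rcases Nat.eq_or_lt_of_le hab with h | h
      · rw [h]
      · have hbN' : b < N := by omega
        have := (hstep ⟨b, hbN'⟩).1
        simp only at this
        rw [this]
        exact (ih (by omega) (by omega)).trans (Finset.subset_insert _ _)
  -- membership characterization
  have hPmem : ∀ (u : Fin N) (v : ℕ), v ≤ N → (P u ∈ invF (σ v) ↔ u.val < v) := by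
    intro u v
    induction v with
    | zero =>
      intro _
      have : σ 0 = 1 := by simp [hσdef]
      rw [this, invF_one]
      simp
    | succ v ih =>
      intro hv
      have hvN : v < N := hv
      have ih' := ih (by omega)
      have hins := (hstep ⟨v, hvN⟩).1
      simp only at hins
      rw [hins, Finset.mem_insert, ih']
      constructor
      · rintro (h | h)
        · -- P u = P ⟨v, hvN⟩ → u = v
          by_contra hc
          push_neg at hc
          rcases Nat.lt_or_ge u.val v with hlt | hge
          · -- u < v : P u ∈ invF (σ v) but P ⟨v⟩ ∉
            have h1 : P u ∈ invF (σ v) := ih'.mpr hlt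
            have h2 := (hstep ⟨v, hvN⟩).2
            rw [h] at h1
            exact h2 h1
          · -- u ≥ v+1 : P ⟨v⟩ ∈ invF (σ u.val) but P u ∉
            have huN : u.val ≥ v + 1 := by omega
            have h1 : P ⟨v, hvN⟩ ∈ invF (σ (v + 1)) := by
              rw [hins]; exact Finset.mem_insert_self _ _
            have h2 : P ⟨v, hvN⟩ ∈ invF (σ u.val) :=
              hmono (v + 1) u.val huN (le_of_lt u.isLt) h1
            have h3 := (hstep u).2
            rw [h] at h3
            exact h3 h2
        · omega
      · intro h
        rcases Nat.lt_or_ge u.val v with hlt | hge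
        · exact Or.inr hlt
        · have : u.val = v := by omega
          left
          congr 1
          exact Fin.ext this
  -- f in terms of P
  have hf : ∀ t : Fin N, f t = (Pi.single (P t).1 1 : Fin (n + 1) → ℤ) - Pi.single (P t).2 1 := by
    intro t
    show permAct n (σ t.val) (simpleA n (i t)) = _
    rw [simpleA, permAct_single]
  have single_sub_ne : ∀ (a b : Fin (n + 1)), a ≠ b →
      (Pi.single a 1 : Fin (n + 1) → ℤ) - Pi.single b 1 ≠ 0 := by
    intro a b hne h0
    have := congrFun h0 a
    rw [Pi.sub_apply, Pi.zero_apply, Pi.single_apply, Pi.single_apply,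
      if_pos rfl, if_neg hne] at this
    omega
  have fne : ∀ t : Fin N, f t ≠ 0 := by
    intro t h0
    exact single_sub_ne _ _ (ne_of_lt (hPlt t)) ((hf t).symm.trans h0)
  -- classification
  have hx := hPlt x
  have hy := hPlt y
  have hz := hPlt z
  have hsum' : ((Pi.single (P x).1 1 : Fin (n + 1) → ℤ) - Pi.single (P x).2 1)
      + ((Pi.single (P y).1 1 : Fin (n + 1) → ℤ) - Pi.single (P y).2 1)
      = (Pi.single (P z).1 1 : Fin (n + 1) → ℤ) - Pi.single (P z).2 1 := by
    rw [← hf x, ← hf y, ← hf z]; exact hsum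
  have hclass := single_classify (P x).1 (P x).2 (P y).1 (P y).2 (P z).1 (P z).2
    (ne_of_lt hx) (ne_of_lt hy) (ne_of_lt hz) hsum'
  -- unified middles: P z = (r, t'), chain through s
  obtain ⟨r, s, t', hPz, hcase⟩ :
      ∃ r s t', P z = (r, t') ∧
        ((P x = (r, s) ∧ P y = (s, t')) ∨ (P y = (r, s) ∧ P x = (s, t'))) := by
    rcases hclass with ⟨h1, h2, h3⟩ | ⟨h1, h2, h3⟩
    · exact ⟨(P x).1, (P x).2, (P y).2, Prod.ext h1 h3,
        Or.inl ⟨Prod.mk.eta.symm, Prod.ext h2.symm rfl⟩⟩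
    · exact ⟨(P y).1, (P y).2, (P x).2, Prod.ext h2 h3,
        Or.inr ⟨Prod.mk.eta.symm, Prod.ext h1 rfl⟩⟩
  have hxz : x ≠ z := by
    intro h
    rw [h] at hsum
    exact fne y (add_eq_left.mp hsum)
  have hyz : y ≠ z := by
    intro h
    rw [h] at hsum
    exact fne x (add_eq_right.mp hsum)
  constructor
  · -- x < z
    by_contra hc
    push_neg at hc
    -- z ≤ x
    have hzx : z.val ≤ x.val := hc
    have hmemz : P z ∈ invF (σ (z.val + 1)) := by
      rw [(hstep z).1]; exact Finset.mem_insert_self _ _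
    rw [hPz, mem_invF] at hmemz
    obtain ⟨hrt, hinv⟩ := hmemz
    -- split
    have hsplit : (r, s) ∈ invF (σ (z.val + 1)) ∨ (s, t') ∈ invF (σ (z.val + 1)) := by
      have hrs : r < s := by
        rcases hcase with ⟨h1, _⟩ | ⟨h1, _⟩
        · have := hPlt x; rw [h1] at this; exact this
        · have := hPlt y; rw [h1] at this; exact this
      have hst : s < t' := by
        rcases hcase with ⟨_, h2⟩ | ⟨_, h2⟩
        · have := hPlt y; rw [h2] at this; exact this
        · have := hPlt x; rw [h2] at this; exact this
      rcases lt_or_ge ((σ (z.val + 1))⁻¹ s) ((σ (z.val + 1))⁻¹ r) with h | h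
      · exact Or.inl ((mem_invF _ _).mpr ⟨hrs, h⟩)
      · refine Or.inr ((mem_invF _ _).mpr ⟨hst, ?_⟩)
        exact lt_of_lt_of_le hinv h
    have hzN : z.val + 1 ≤ N := z.isLt
    rcases hcase with ⟨h1, h2⟩ | ⟨h1, h2⟩
    · rcases hsplit with h | h
      · rw [← h1] at h
        have := (hPmem x (z.val + 1) hzN).mp h
        have : x.val = z.val := by omega
        exact hxz (Fin.ext this)
      · rw [← h2] at h
        have := (hPmem y (z.val + 1) hzN).mp h
        have hxy' : x.val < y.val := hxy
        omega
    · rcases hsplit with h | h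
      · rw [← h1] at h
        have := (hPmem y (z.val + 1) hzN).mp h
        have hxy' : x.val < y.val := hxy
        omega
      · rw [← h2] at h
        have := (hPmem x (z.val + 1) hzN).mp h
        have : x.val = z.val := by omega
        exact hxz (Fin.ext this)
  · -- z < y
    by_contra hc
    push_neg at hc
    have hyz' : y.val ≤ z.val := hc
    have hyN : y.val + 1 ≤ N := y.isLt
    have hmx : P x ∈ invF (σ (y.val + 1)) := by
      apply (hPmem x (y.val + 1) hyN).mpr
      have : x.val < y.val := hxy
      omega
    have hmy : P y ∈ invF (σ (y.val + 1)) := (hPmem y (y.val + 1) hyN).mpr (by omega)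
    -- transitivity gives P z ∈
    have hmz : P z ∈ invF (σ (y.val + 1)) := by
      rw [hPz, mem_invF]
      rcases hcase with ⟨h1, h2⟩ | ⟨h1, h2⟩
      · rw [h1, mem_invF] at hmx
        rw [h2, mem_invF] at hmy
        exact ⟨lt_trans hmx.1 hmy.1, lt_trans hmy.2 hmx.2⟩
      · rw [h1, mem_invF] at hmy
        rw [h2, mem_invF] at hmx
        exact ⟨lt_trans hmy.1 hmx.1, lt_trans hmx.2 hmy.2⟩
    have := (hPmem z (y.val + 1) hyN).mp hmz
    have : z.val = y.val := by omega
    exact hyz (Fin.ext this.symm)
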